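/- There is a dimensional constant τ_n such that for every weight w ∈ A_∞, setting ε_w = 1/(1 + τ_n [w]_{A_∞}), one has for every cube Q and every measurable set E ⊆ Q: w(E)/w(Q) ≤ 2 (|E|/|Q|)^{ε_w}. -/

import Mathlib

open MeasureTheory ENNReal NNReal

noncomputable section

/-- An axis-parallel cube in `ℝⁿ`. -/
def IsCube {n : ℕ} (Q : Set (Fin n → ℝ)) : Prop :=
  ∃ (a : Fin n → ℝ) (h : ℝ), 0 < h ∧ Q = {x | ∀ i, a i ≤ x i ∧ x i ≤ a i + h}

/-- Average `(1/|Q|) ∫_Q f` of an `ℝ≥0∞`-valued function over a set. -/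
def cubeAvg {n : ℕ} (f : (Fin n → ℝ) → ℝ≥0∞) (Q : Set (Fin n → ℝ)) : ℝ≥0∞ :=
  (∫⁻ x in Q, f x) / MeasureTheory.volume Q

/-- The uncentered Hardy–Littlewood maximal operator over axis-parallel cubes,
for `ℝ≥0∞`-valued functions. -/
def hlM {n : ℕ} (f : (Fin n → ℝ) → ℝ≥0∞) (x : Fin n → ℝ) : ℝ≥0∞ :=
  ⨆ (Q : Set (Fin n → ℝ)) (_ : IsCube Q) (_ : x ∈ Q), cubeAvg f Q

/-- The Hardy–Littlewood maximal operator applied to a real-valued function: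
`Mf(x) = sup_{Q ∋ x} (1/|Q|) ∫_Q |f|`. -/
def hlMR {n : ℕ} (f : (Fin n → ℝ) → ℝ) : (Fin n → ℝ) → ℝ≥0∞ :=
  hlM (fun y => ENNReal.ofReal |f y|)

/-- A weight: a locally integrable, a.e. positive function. -/
def IsWeight {n : ℕ} (w : (Fin n → ℝ) → ℝ) : Prop :=
  MeasureTheory.LocallyIntegrable w MeasureTheory.volume ∧
    ∀ᵐ x ∂(MeasureTheory.volume : MeasureTheory.Measure (Fin n → ℝ)), 0 < w x

/-- `w(E) = ∫_E w dx`. -/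
def wMeas {n : ℕ} (w : (Fin n → ℝ) → ℝ) (E : Set (Fin n → ℝ)) : ℝ≥0∞ :=
  ∫⁻ x in E, ENNReal.ofReal (w x)

/-- The `A₁` constant `[w]_{A₁} = ess sup_x M w(x) / w(x)`. -/
def a1Const {n : ℕ} (w : (Fin n → ℝ) → ℝ) : ℝ≥0∞ :=
  essSup (fun x => hlM (fun y => ENNReal.ofReal (w y)) x / ENNReal.ofReal (w x))
    MeasureTheory.volume

/-- The Fujii–Wilson `A_∞` constant `[w]_{A_∞} = sup_Q (1/∫_Q w) ∫_Q M(w·1_Q)`. -/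
def aInfConst {n : ℕ} (w : (Fin n → ℝ) → ℝ) : ℝ≥0∞ :=
  ⨆ (Q : Set (Fin n → ℝ)) (_ : IsCube Q),
    (∫⁻ x in Q, hlM (Q.indicator fun y => ENNReal.ofReal (w y)) x) / wMeas w Q

/-- The `A_p` constant, `1 < p < ∞`:
`[w]_{A_p} = sup_Q ⟨w⟩_Q (⟨w^{-1/(p-1)}⟩_Q)^{p-1}`. -/
def apConst {n : ℕ} (p : ℝ) (w : (Fin n → ℝ) → ℝ) : ℝ≥0∞ :=
  ⨆ (Q : Set (Fin n → ℝ)) (_ : IsCube Q),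
    cubeAvg (fun y => ENNReal.ofReal (w y)) Q *
      (cubeAvg (fun y => ENNReal.ofReal (w y) ^ (-(1 / (p - 1)))) Q) ^ (p - 1)

/-- The weak norm `‖g‖_{L^{1,∞}(σ)} = sup_{t>0} t · σ({x : g(x) > t})`
for an `ℝ≥0∞`-valued function `g` and a weight `σ`. -/
def wkNorm {n : ℕ} (g : (Fin n → ℝ) → ℝ≥0∞) (σ : (Fin n → ℝ) → ℝ) : ℝ≥0∞ :=
  ⨆ (t : ℝ≥0) (_ : 0 < t), (t : ℝ≥0∞) * wMeas σ {x | (t : ℝ≥0∞) < g x}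

/-- `‖f‖_{L¹(σ)} = ∫ |f| σ dx`. -/
def l1Norm {n : ℕ} (f : (Fin n → ℝ) → ℝ) (σ : (Fin n → ℝ) → ℝ) : ℝ≥0∞ :=
  ∫⁻ x, ENNReal.ofReal |f x| * ENNReal.ofReal (σ x)

/-- `‖g‖_{L^p(σ)} = (∫ g^p σ dx)^{1/p}` for an `ℝ≥0∞`-valued `g`. -/
def lpNormE {n : ℕ} (p : ℝ) (g : (Fin n → ℝ) → ℝ≥0∞) (σ : (Fin n → ℝ) → ℝ) : ℝ≥0∞ :=
  (∫⁻ x, g x ^ p * ENNReal.ofReal (σ x)) ^ (1 / p)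

/-- A bounded, compactly supported measurable function. -/
def BddCompSupp {n : ℕ} (f : (Fin n → ℝ) → ℝ) : Prop :=
  Measurable f ∧ (∃ C : ℝ, ∀ x, |f x| ≤ C) ∧ HasCompactSupport f

end

noncomputable section AinfAux
open Set Metric Filter

namespace AinfAux

variable {n : ℕ}

/-- dyadic side length -/
def cs (h : ℝ) (k : ℕ) : ℝ := h / 2 ^ k

lemma cs_pos {h : ℝ} (hh : 0 < h) (k : ℕ) : 0 < cs h k := div_pos hh (by positivity)

lemma cs_zero (h : ℝ) : cs h 0 = h := by simp [cs]

lemma cs_succ (h : ℝ) (k : ℕ) : cs h k = 2 * cs h (k + 1) := by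
  rw [cs, cs, pow_succ]; field_simp

lemma cs_mul (h : ℝ) {k K : ℕ} (hkK : k ≤ K) : cs h k = cs h K * ((2 : ℕ) ^ (K - k) : ℕ) := by
  have h2 : (2 : ℝ) ^ K = 2 ^ k * 2 ^ (K - k) := by rw [← pow_add]; congr 1; omega
  rw [cs, cs, h2]
  push_cast
  field_simp

/-- half-open dyadic cell -/
def cell (a : Fin n → ℝ) (h : ℝ) (k : ℕ) (v : Fin n → ℕ) : Set (Fin n → ℝ) :=
  Set.pi Set.univ fun i => Set.Ico (a i + v i * cs h k) (a i + (v i + 1) * cs h k)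

/-- closed dyadic cell -/
def ccell (a : Fin n → ℝ) (h : ℝ) (k : ℕ) (v : Fin n → ℕ) : Set (Fin n → ℝ) :=
  Set.pi Set.univ fun i => Set.Icc (a i + v i * cs h k) (a i + (v i + 1) * cs h k)

lemma mem_cell {a : Fin n → ℝ} {h : ℝ} {k : ℕ} {v : Fin n → ℕ} {x : Fin n → ℝ} :
    x ∈ cell a h k v ↔ ∀ i, a i + v i * cs h k ≤ x i ∧ x i < a i + (v i + 1) * cs h k := by
  simp [cell, Set.mem_pi]

lemma cell_subset_ccell (a : Fin n → ℝ) (h : ℝ) (k : ℕ) (v : Fin n → ℕ) :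
    cell a h k v ⊆ ccell a h k v :=
  Set.pi_mono fun i _ => Set.Ico_subset_Icc_self

def idx (a : Fin n → ℝ) (h : ℝ) (k : ℕ) (x : Fin n → ℝ) : Fin n → ℕ :=
  fun i => ⌊(x i - a i) / cs h k⌋₊

def valid (k : ℕ) (v : Fin n → ℕ) : Prop := ∀ i, v i < 2 ^ k

lemma idx_eq_of_mem {a : Fin n → ℝ} {h : ℝ} (hh : 0 < h) {k : ℕ} {v : Fin n → ℕ}
    {x : Fin n → ℝ} (hx : x ∈ cell a h k v) : idx a h k x = v := by
  funext i
  obtain ⟨h1, h2⟩ := mem_cell.1 hx i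
  have hs := cs_pos hh k
  have hl : (v i : ℝ) ≤ (x i - a i) / cs h k := by rw [le_div_iff₀ hs]; linarith
  have hu : (x i - a i) / cs h k < v i + 1 := by rw [div_lt_iff₀ hs]; linarith
  exact (Nat.floor_eq_iff (le_trans (Nat.cast_nonneg _) hl)).2 ⟨hl, hu⟩

lemma mem_cell_idx {a : Fin n → ℝ} {h : ℝ} (hh : 0 < h) {x : Fin n → ℝ}
    (hx : ∀ i, a i ≤ x i) (k : ℕ) : x ∈ cell a h k (idx a h k x) := by
  rw [mem_cell]
  intro i
  have hs := cs_pos hh k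
  have h0 : 0 ≤ (x i - a i) / cs h k := div_nonneg (by linarith [hx i]) hs.le
  have hfl : (idx a h k x i : ℝ) = (⌊(x i - a i) / cs h k⌋₊ : ℝ) := rfl
  constructor
  · have h1 : (⌊(x i - a i) / cs h k⌋₊ : ℝ) ≤ (x i - a i) / cs h k := Nat.floor_le h0
    have h1' : (⌊(x i - a i) / cs h k⌋₊ : ℝ) * cs h k ≤ x i - a i := by
      have := mul_le_mul_of_nonneg_right h1 hs.le
      calc (⌊(x i - a i) / cs h k⌋₊ : ℝ) * cs h k ≤ ((x i - a i) / cs h k) * cs h k := this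
        _ = x i - a i := by field_simp
    rw [hfl]; linarith
  · have h2 : (x i - a i) / cs h k < (⌊(x i - a i) / cs h k⌋₊ : ℝ) + 1 :=
      Nat.lt_floor_add_one _
    have h3 : x i - a i < ((⌊(x i - a i) / cs h k⌋₊ : ℝ) + 1) * cs h k := by
      have := (div_lt_iff₀ hs).1 h2
      linarith
    rw [hfl]; linarith

lemma mem_Q_iff {a : Fin n → ℝ} {h : ℝ} {x : Fin n → ℝ} :
    x ∈ cell a h 0 0 ↔ ∀ i, a i ≤ x i ∧ x i < a i + h := by
  simp [mem_cell, cs_zero]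

lemma idx_valid {a : Fin n → ℝ} {h : ℝ} (hh : 0 < h) {x : Fin n → ℝ}
    (hx : x ∈ cell a h 0 0) (k : ℕ) : valid k (idx a h k x) := by
  intro i
  obtain ⟨h1, h2⟩ := mem_Q_iff.1 hx i
  have hs := cs_pos hh k
  have h0 : 0 ≤ (x i - a i) / cs h k := div_nonneg (by linarith) hs.le
  rw [idx, Nat.floor_lt h0]
  rw [div_lt_iff₀ hs, cs]
  push_cast
  have h2k : (0:ℝ) < 2 ^ k := by positivity
  calc x i - a i < h := by linarith
    _ = 2 ^ k * (h / 2 ^ k) := by field_simp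

lemma idx_div {a : Fin n → ℝ} {h : ℝ} (hh : 0 < h) {x : Fin n → ℝ}
    (hx : ∀ i, a i ≤ x i) {k K : ℕ} (hkK : k ≤ K) (i : Fin n) :
    idx a h k x i = idx a h K x i / 2 ^ (K - k) := by
  have : (x i - a i) / cs h k = ((x i - a i) / cs h K) / ((2 ^ (K - k) : ℕ) : ℝ) := by
    rw [cs_mul h hkK]; push_cast; rw [div_div]
  show ⌊(x i - a i) / cs h k⌋₊ = ⌊(x i - a i) / cs h K⌋₊ / 2 ^ (K - k)
  rw [this, Nat.floor_div_natCast]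

lemma cell_subset_Q {a : Fin n → ℝ} {h : ℝ} (hh : 0 < h) {k : ℕ} {v : Fin n → ℕ}
    (hv : valid k v) : cell a h k v ⊆ cell a h 0 0 := by
  intro x hx
  rw [mem_Q_iff]
  intro i
  obtain ⟨h1, h2⟩ := mem_cell.1 hx i
  have hs := cs_pos hh k
  have hvi : ((v i : ℝ) + 1) ≤ 2 ^ k := by
    have := hv i
    have : (v i : ℝ) + 1 ≤ (2 ^ k : ℕ) := by exact_mod_cast Nat.succ_le_of_lt this
    simpa using this
  constructor
  · nlinarith [mul_nonneg (Nat.cast_nonneg (v i) : (0:ℝ) ≤ v i) hs.le]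
  · have : ((v i : ℝ) + 1) * cs h k ≤ 2 ^ k * cs h k := by nlinarith
    have h2k : (2 : ℝ) ^ k * cs h k = h := by rw [cs]; field_simp
    linarith

lemma volume_cell (a : Fin n → ℝ) {h : ℝ} (hh : 0 < h) (k : ℕ) (v : Fin n → ℕ) :
    volume (cell a h k v) = ENNReal.ofReal (cs h k) ^ n := by
  rw [cell, volume_pi_pi]
  have : ∀ i : Fin n, volume (Ico (a i + v i * cs h k) (a i + (v i + 1) * cs h k))
      = ENNReal.ofReal (cs h k) := by
    intro i; rw [Real.volume_Ico]; congr 1; ring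
  simp [this, Finset.prod_const]

lemma volume_ccell (a : Fin n → ℝ) {h : ℝ} (hh : 0 < h) (k : ℕ) (v : Fin n → ℕ) :
    volume (ccell a h k v) = ENNReal.ofReal (cs h k) ^ n := by
  rw [ccell, volume_pi_pi]
  have : ∀ i : Fin n, volume (Icc (a i + v i * cs h k) (a i + (v i + 1) * cs h k))
      = ENNReal.ofReal (cs h k) := by
    intro i; rw [Real.volume_Icc]; congr 1; ring
  simp [this, Finset.prod_const]

lemma volume_cell_ne_zero (a : Fin n → ℝ) {h : ℝ} (hh : 0 < h) (k : ℕ) (v : Fin n → ℕ) :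
    volume (cell a h k v) ≠ 0 := by
  rw [volume_cell a hh k v]
  exact pow_ne_zero _ (by simp [ENNReal.ofReal_eq_zero, not_le, cs_pos hh k])

lemma volume_cell_ne_top (a : Fin n → ℝ) {h : ℝ} (hh : 0 < h) (k : ℕ) (v : Fin n → ℕ) :
    volume (cell a h k v) ≠ ⊤ := by
  rw [volume_cell a hh k v]
  exact (pow_ne_top ofReal_ne_top)

lemma measurableSet_cell (a : Fin n → ℝ) (h : ℝ) (k : ℕ) (v : Fin n → ℕ) :
    MeasurableSet (cell a h k v) :=
  MeasurableSet.univ_pi fun i => measurableSet_Ico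

lemma measurableSet_ccell (a : Fin n → ℝ) (h : ℝ) (k : ℕ) (v : Fin n → ℕ) :
    MeasurableSet (ccell a h k v) :=
  MeasurableSet.univ_pi fun i => measurableSet_Icc

lemma isCube_ccell (a : Fin n → ℝ) {h : ℝ} (hh : 0 < h) (k : ℕ) (v : Fin n → ℕ) :
    IsCube (ccell a h k v) := by
  refine ⟨fun i => a i + v i * cs h k, cs h k, cs_pos hh k, ?_⟩
  ext x
  simp only [ccell, Set.mem_pi, Set.mem_univ, Set.mem_Icc, forall_true_left, Set.mem_setOf_eq]
  refine forall_congr' fun i => ?_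
  constructor
  · rintro ⟨h1, h2⟩; exact ⟨h1, by nlinarith [cs_pos hh k]⟩
  · rintro ⟨h1, h2⟩; exact ⟨h1, by nlinarith [cs_pos hh k]⟩

lemma volume_hyperplane (i : Fin n) (c : ℝ) : volume {x : Fin n → ℝ | x i = c} = 0 := by
  have hset : {x : Fin n → ℝ | x i = c}
      = Set.pi Set.univ (Function.update (fun _ : Fin n => (Set.univ : Set ℝ)) i {c}) := by
    ext x
    simp only [Set.mem_setOf_eq, Set.mem_pi, Set.mem_univ, forall_true_left]
    constructor
    · intro hx j
      rcases eq_or_ne j i with rfl | hj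
      · simp [hx]
      · simp [Function.update_of_ne hj]
    · intro hx
      have := hx i
      simpa using this
  rw [hset, volume_pi_pi]
  refine Finset.prod_eq_zero (Finset.mem_univ i) ?_
  simp

lemma volume_ccell_diff_cell (a : Fin n → ℝ) (h : ℝ) (k : ℕ) (v : Fin n → ℕ) :
    volume (ccell a h k v \ cell a h k v) = 0 := by
  have hsub : ccell a h k v \ cell a h k v
      ⊆ ⋃ i : Fin n, {x : Fin n → ℝ | x i = a i + (v i + 1) * cs h k} := by
    rintro x ⟨hxc, hxn⟩
    have : ¬ ∀ i, a i + v i * cs h k ≤ x i ∧ x i < a i + (v i + 1) * cs h k := by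
      intro hcon; exact hxn (mem_cell.2 hcon)
    push_neg at this
    obtain ⟨i, hi⟩ := this
    have hxi := hxc i (Set.mem_univ i)
    simp only [Set.mem_Icc] at hxi
    refine Set.mem_iUnion.2 ⟨i, ?_⟩
    have h5 := hi hxi.1
    simp only [Set.mem_setOf_eq]
    linarith [hxi.2, h5]
  refine measure_mono_null hsub ?_
  refine measure_iUnion_null fun i => volume_hyperplane i _
  

/-! ### Averages, stopping cells, level sets -/

def avg (a : Fin n → ℝ) (h : ℝ) (f : (Fin n → ℝ) → ℝ≥0∞) (k : ℕ) (v : Fin n → ℕ) : ℝ≥0∞ :=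
  (∫⁻ x in cell a h k v, f x) / volume (cell a h k v)

def Stop (a : Fin n → ℝ) (h : ℝ) (f : (Fin n → ℝ) → ℝ≥0∞) (lam : ℝ≥0∞)
    (p : ℕ × (Fin n → ℕ)) : Prop :=
  valid p.1 p.2 ∧ lam < avg a h f p.1 p.2 ∧
    ∀ k' < p.1, ¬ lam < avg a h f k' (fun i => p.2 i / 2 ^ (p.1 - k'))

def Omega (a : Fin n → ℝ) (h : ℝ) (f : (Fin n → ℝ) → ℝ≥0∞) (lam : ℝ≥0∞) :
    Set (Fin n → ℝ) :=
  ⋃ p : {p : ℕ × (Fin n → ℕ) // Stop a h f lam p}, cell a h p.1.1 p.1.2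

lemma avg_mul_volume {a : Fin n → ℝ} {h : ℝ} (hh : 0 < h)
    (f : (Fin n → ℝ) → ℝ≥0∞) (k : ℕ) (v : Fin n → ℕ) :
    avg a h f k v * volume (cell a h k v) = ∫⁻ x in cell a h k v, f x :=
  ENNReal.div_mul_cancel (volume_cell_ne_zero a hh k v) (volume_cell_ne_top a hh k v)

lemma mem_Omega {a : Fin n → ℝ} {h : ℝ} (hh : 0 < h) {f : (Fin n → ℝ) → ℝ≥0∞}
    {lam : ℝ≥0∞} {x : Fin n → ℝ} :
    x ∈ Omega a h f lam ↔ x ∈ cell a h 0 0 ∧ ∃ k, lam < avg a h f k (idx a h k x) := by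
  constructor
  · intro hx
    obtain ⟨⟨p, hp⟩, hxp⟩ := Set.mem_iUnion.1 hx
    have hQ : x ∈ cell a h 0 0 := cell_subset_Q hh hp.1 hxp
    have : idx a h p.1 x = p.2 := idx_eq_of_mem hh hxp
    exact ⟨hQ, ⟨p.1, by rw [this]; exact hp.2.1⟩⟩
  · rintro ⟨hQ, hex⟩
    classical
    have hx' : ∀ i, a i ≤ x i := fun i => (mem_Q_iff.1 hQ i).1
    let K := Nat.find hex
    refine Set.mem_iUnion.2 ⟨⟨(K, idx a h K x), ?_, ?_, ?_⟩, ?_⟩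
    · exact idx_valid hh hQ K
    · exact Nat.find_spec hex
    · intro k' hk'
      have hanc : (fun i => idx a h K x i / 2 ^ (K - k')) = idx a h k' x := by
        funext i; exact (idx_div hh hx' hk'.le i).symm
      simp only [hanc]
      exact Nat.find_min hex hk'
    · exact mem_cell_idx hh hx' K

lemma Omega_subset_Q {a : Fin n → ℝ} {h : ℝ} (hh : 0 < h) {f : (Fin n → ℝ) → ℝ≥0∞}
    {lam : ℝ≥0∞} : Omega a h f lam ⊆ cell a h 0 0 := by
  intro x hx; exact ((mem_Omega hh).1 hx).1

lemma Omega_antitone {a : Fin n → ℝ} {h : ℝ} (hh : 0 < h) {f : (Fin n → ℝ) → ℝ≥0∞}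
    {lam lam' : ℝ≥0∞} (hl : lam ≤ lam') : Omega a h f lam' ⊆ Omega a h f lam := by
  intro x hx
  obtain ⟨hQ, k, hk⟩ := (mem_Omega hh).1 hx
  exact (mem_Omega hh).2 ⟨hQ, k, lt_of_le_of_lt hl hk⟩

lemma measurableSet_Omega (a : Fin n → ℝ) (h : ℝ) (f : (Fin n → ℝ) → ℝ≥0∞) (lam : ℝ≥0∞) :
    MeasurableSet (Omega a h f lam) :=
  MeasurableSet.iUnion fun p => measurableSet_cell a h p.1.1 p.1.2

lemma stop_disjoint {a : Fin n → ℝ} {h : ℝ} (hh : 0 < h) {f : (Fin n → ℝ) → ℝ≥0∞}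
    {lam : ℝ≥0∞} {p q : ℕ × (Fin n → ℕ)} (hp : Stop a h f lam p) (hq : Stop a h f lam q)
    (hpq : p ≠ q) : Disjoint (cell a h p.1 p.2) (cell a h q.1 q.2) := by
  have key : ∀ p q : ℕ × (Fin n → ℕ), Stop a h f lam p → Stop a h f lam q → p.1 ≤ q.1 →
      p ≠ q → Disjoint (cell a h p.1 p.2) (cell a h q.1 q.2) := by
    intro p q hp hq hle hpq
    rw [Set.disjoint_left]
    intro x hxp hxq
    have hx' : ∀ i, a i ≤ x i := fun i => (mem_Q_iff.1 (cell_subset_Q hh hq.1 hxq) i).1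
    have h1 : idx a h p.1 x = p.2 := idx_eq_of_mem hh hxp
    have h2 : idx a h q.1 x = q.2 := idx_eq_of_mem hh hxq
    rcases eq_or_lt_of_le hle with heq | hlt
    · apply hpq
      have : p.2 = q.2 := by
        rw [← h1, ← h2, heq]
      exact Prod.ext heq this
    · have hanc : (fun i => q.2 i / 2 ^ (q.1 - p.1)) = p.2 := by
        funext i
        rw [← h1, ← h2]
        exact (idx_div hh hx' hlt.le i).symm
      have := hq.2.2 p.1 hlt
      rw [hanc] at this
      exact this hp.2.1
  rcases le_total p.1 q.1 with hle | hle
  · exact key p q hp hq hle hpq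
  · exact (key q p hq hp hle (Ne.symm hpq)).symm

lemma lintegral_Omega {a : Fin n → ℝ} {h : ℝ} (hh : 0 < h) {f : (Fin n → ℝ) → ℝ≥0∞}
    (lam : ℝ≥0∞) (g : (Fin n → ℝ) → ℝ≥0∞) :
    ∫⁻ x in Omega a h f lam, g x
      = ∑' p : {p : ℕ × (Fin n → ℕ) // Stop a h f lam p}, ∫⁻ x in cell a h p.1.1 p.1.2, g x := by
  have hd : Pairwise (Function.onFun Disjoint fun p : {p : ℕ × (Fin n → ℕ) // Stop a h f lam p} =>
      cell a h p.1.1 p.1.2) := fun p q hpq =>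
    stop_disjoint hh p.2 q.2 (fun hc => hpq (Subtype.ext hc))
  rw [Omega]
  exact lintegral_iUnion (β := {p : ℕ × (Fin n → ℕ) // Stop a h f lam p})
    (s := fun p => cell a h p.1.1 p.1.2) (fun p => measurableSet_cell a h p.1.1 p.1.2) hd g

lemma volume_Omega {a : Fin n → ℝ} {h : ℝ} (hh : 0 < h) {f : (Fin n → ℝ) → ℝ≥0∞}
    (lam : ℝ≥0∞) :
    volume (Omega a h f lam)
      = ∑' p : {p : ℕ × (Fin n → ℕ) // Stop a h f lam p}, volume (cell a h p.1.1 p.1.2) := by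
  have hd : Pairwise (Function.onFun Disjoint fun p : {p : ℕ × (Fin n → ℕ) // Stop a h f lam p} =>
      cell a h p.1.1 p.1.2) := fun p q hpq =>
    stop_disjoint hh p.2 q.2 (fun hc => hpq (Subtype.ext hc))
  rw [Omega]
  exact measure_iUnion (ι := {p : ℕ × (Fin n → ℕ) // Stop a h f lam p})
    (f := fun p => cell a h p.1.1 p.1.2) hd (fun p => measurableSet_cell a h p.1.1 p.1.2)

/-- Chebyshev: `lam · |Ω_lam| ≤ ∫_{Ω_lam} f`. -/
lemma mul_volume_Omega_le {a : Fin n → ℝ} {h : ℝ} (hh : 0 < h) {f : (Fin n → ℝ) → ℝ≥0∞}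
    (lam : ℝ≥0∞) :
    lam * volume (Omega a h f lam) ≤ ∫⁻ x in Omega a h f lam, f x := by
  rw [volume_Omega hh lam, lintegral_Omega hh lam f, ← ENNReal.tsum_mul_left]
  refine ENNReal.tsum_le_tsum fun p => ?_
  calc lam * volume (cell a h p.1.1 p.1.2)
      ≤ avg a h f p.1.1 p.1.2 * volume (cell a h p.1.1 p.1.2) :=
        mul_le_mul_left p.2.2.1.le _
    _ = ∫⁻ x in cell a h p.1.1 p.1.2, f x := avg_mul_volume hh f _ _

/-- Parent bound for a single stopping cell. -/
lemma stop_cell_bound {a : Fin n → ℝ} {h : ℝ} (hh : 0 < h) {f : (Fin n → ℝ) → ℝ≥0∞}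
    {lam : ℝ≥0∞} (hσ : avg a h f 0 0 ≤ lam) {p : ℕ × (Fin n → ℕ)}
    (hp : Stop a h f lam p) :
    ∫⁻ x in cell a h p.1 p.2, f x ≤ 2 ^ n * lam * volume (cell a h p.1 p.2) := by
  obtain ⟨k, v⟩ := p
  match k, hp with
  | 0, hp => 
    exfalso
    have hv : v = 0 := by
      funext i
      have := hp.1 i
      simpa [Nat.lt_one_iff] using this
    rw [hv] at hp
    exact absurd hp.2.1 (not_lt.2 hσ)
  | (k₀+1), hp => 
    have hpar : ¬ lam < avg a h f k₀ (fun i => v i / 2 ^ (k₀ + 1 - k₀)) :=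
      hp.2.2 k₀ (Nat.lt_succ_self k₀)
    have hexp : k₀ + 1 - k₀ = 1 := by omega
    rw [hexp] at hpar
    have hparle : avg a h f k₀ (fun i => v i / 2 ^ 1) ≤ lam := not_lt.1 hpar
    have hsub : cell a h (k₀+1) v ⊆ cell a h k₀ (fun i => v i / 2 ^ 1) := by
      intro x hx
      have hx' : ∀ i, a i ≤ x i := by
        intro i
        have := (mem_cell.1 hx i).1
        have h0 : (0:ℝ) ≤ (v i : ℝ) * cs h (k₀+1) :=
          mul_nonneg (Nat.cast_nonneg _) (cs_pos hh _).le
        linarith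
      have h1 : idx a h (k₀+1) x = v := idx_eq_of_mem hh hx
      have h2 : idx a h k₀ x = fun i => v i / 2 ^ 1 := by
        funext i
        rw [idx_div hh hx' (Nat.le_succ k₀) i, h1]
        have he : k₀ + 1 - k₀ = 1 := by omega
        rw [he]
      rw [← h2]
      exact mem_cell_idx hh hx' k₀
    calc ∫⁻ x in cell a h (k₀+1) v, f x
        ≤ ∫⁻ x in cell a h k₀ (fun i => v i / 2 ^ 1), f x := lintegral_mono_set hsub
      _ = avg a h f k₀ (fun i => v i / 2 ^ 1) * volume (cell a h k₀ (fun i => v i / 2 ^ 1)) :=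
          (avg_mul_volume hh f _ _).symm
      _ ≤ lam * volume (cell a h k₀ (fun i => v i / 2 ^ 1)) := mul_le_mul_left hparle _
      _ = lam * (2 ^ n * volume (cell a h (k₀+1) v)) := by
          rw [volume_cell a hh k₀ _, volume_cell a hh (k₀+1) v]
          rw [cs_succ h k₀]
          rw [ENNReal.ofReal_mul (by norm_num : (0:ℝ) ≤ 2)]
          rw [mul_pow]
          congr 1
          norm_num
      _ = 2 ^ n * lam * volume (cell a h (k₀+1) v) := by ring

lemma lintegral_Omega_le {a : Fin n → ℝ} {h : ℝ} (hh : 0 < h) {f : (Fin n → ℝ) → ℝ≥0∞}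
    {lam : ℝ≥0∞} (hσ : avg a h f 0 0 ≤ lam) :
    ∫⁻ x in Omega a h f lam, f x ≤ 2 ^ n * lam * volume (Omega a h f lam) := by
  rw [volume_Omega hh lam, lintegral_Omega hh lam f, ← ENNReal.tsum_mul_left]
  exact ENNReal.tsum_le_tsum fun p => stop_cell_bound hh hσ p.2

/-- Values of the maximal function on a stopping cell exceed `lam`. -/
lemma lt_hlM_of_mem_Omega {a : Fin n → ℝ} {h : ℝ} (hh : 0 < h) {f : (Fin n → ℝ) → ℝ≥0∞}
    {lam : ℝ≥0∞} {x : Fin n → ℝ} (hx : x ∈ Omega a h f lam) :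
    lam < hlM ((ccell a h 0 0).indicator f) x := by
  obtain ⟨⟨p, hp⟩, hxp⟩ := Set.mem_iUnion.1 hx
  have hcc : x ∈ ccell a h p.1 p.2 := cell_subset_ccell a h p.1 p.2 hxp
  have hsubQ : cell a h p.1 p.2 ⊆ ccell a h 0 0 :=
    (cell_subset_Q hh hp.1).trans (cell_subset_ccell a h 0 0)
  have havg : avg a h f p.1 p.2 ≤ cubeAvg ((ccell a h 0 0).indicator f) (ccell a h p.1 p.2) := by
    rw [avg, cubeAvg, volume_ccell a hh p.1 p.2, ← volume_cell a hh p.1 p.2]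
    refine ENNReal.div_le_div_right ?_ _
    calc ∫⁻ x in cell a h p.1 p.2, f x
        = ∫⁻ x in cell a h p.1 p.2, (ccell a h 0 0).indicator f x := by
          refine (setLIntegral_congr_fun (measurableSet_cell a h p.1 p.2) ?_).symm
          exact fun y hy => Set.indicator_of_mem (hsubQ hy) f
      _ ≤ ∫⁻ x in ccell a h p.1 p.2, (ccell a h 0 0).indicator f x :=
          lintegral_mono_set (cell_subset_ccell a h p.1 p.2)
  refine lt_of_lt_of_le (lt_of_lt_of_le hp.2.1 havg) ?_
  rw [hlM]
  exact le_iSup_of_le (ccell a h p.1 p.2)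
    (le_iSup_of_le (isCube_ccell a hh p.1 p.2) (le_iSup_of_le hcc le_rfl))


/-! ### Density lemma -/

lemma key_density {a : Fin n → ℝ} {h : ℝ} (hh : 0 < h) {f : (Fin n → ℝ) → ℝ≥0∞}
    {U : Set (Fin n → ℝ)} (hU : MeasurableSet U) (hUQ : U ⊆ cell a h 0 0)
    {c lam : ℝ≥0∞} (hcf : ∀ x ∈ U, c ≤ f x) (hlam : lam < c) :
    volume (U \ Omega a h f lam) = 0 := by
  have hbes := Besicovitch.ae_tendsto_measure_inter_div (volume : Measure (Fin n → ℝ)) U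
  have key : ∀ x ∈ U, Tendsto (fun r => volume (U ∩ closedBall x r) / volume (closedBall x r))
      (nhdsWithin 0 (Ioi 0)) (nhds 1) → x ∈ Omega a h f lam := by
    intro x hxU hx
    have hx' : ∀ i, a i ≤ x i := fun i => (mem_Q_iff.1 (hUQ hxU) i).1
    have hsr : Tendsto (fun k : ℕ => cs h k) atTop (nhdsWithin 0 (Ioi 0)) := by
      apply tendsto_nhdsWithin_of_tendsto_nhds_of_eventually_within
      · have h2 : Tendsto (fun k : ℕ => (2⁻¹ : ℝ) ^ k) atTop (nhds 0) :=
          tendsto_pow_atTop_nhds_zero_of_lt_one (by norm_num) (by norm_num)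
        have h3 := h2.const_mul h
        simp only [mul_zero] at h3
        convert h3 using 2 with k
        rw [cs, div_eq_mul_inv, inv_pow]
      · exact Filter.Eventually.of_forall fun k => cs_pos hh k
    have hrk : Tendsto (fun k : ℕ =>
        volume (U ∩ closedBall x (cs h k)) / volume (closedBall x (cs h k))) atTop (nhds 1) :=
      hx.comp hsr
    have h1 : Tendsto (fun k : ℕ => (1 : ℝ≥0∞) -
        volume (U ∩ closedBall x (cs h k)) / volume (closedBall x (cs h k))) atTop (nhds 0) := by
      have := ENNReal.Tendsto.sub
        (tendsto_const_nhds : Tendsto (fun _ : ℕ => (1:ℝ≥0∞)) atTop (nhds 1)) hrk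
        (Or.inl one_ne_top)
      simpa using this
    have h2 : Tendsto (fun k : ℕ => (2:ℝ≥0∞) ^ n * ((1 : ℝ≥0∞) -
        volume (U ∩ closedBall x (cs h k)) / volume (closedBall x (cs h k)))) atTop (nhds 0) := by
      have := ENNReal.Tendsto.const_mul h1
        (a := (2:ℝ≥0∞) ^ n) (Or.inr (pow_ne_top ENNReal.ofNat_ne_top))
      simpa using this
    have h3 : Tendsto (fun k : ℕ => c * ((1:ℝ≥0∞) - (2:ℝ≥0∞) ^ n * ((1 : ℝ≥0∞) -
        volume (U ∩ closedBall x (cs h k)) / volume (closedBall x (cs h k))))) atTop (nhds c) := by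
      have hin : Tendsto (fun k : ℕ => (1:ℝ≥0∞) - (2:ℝ≥0∞) ^ n * ((1 : ℝ≥0∞) -
          volume (U ∩ closedBall x (cs h k)) / volume (closedBall x (cs h k)))) atTop (nhds 1) := by
        have := ENNReal.Tendsto.sub
          (tendsto_const_nhds : Tendsto (fun _ : ℕ => (1:ℝ≥0∞)) atTop (nhds 1)) h2
          (Or.inl one_ne_top)
        simpa using this
      have := ENNReal.Tendsto.const_mul hin (a := c) (Or.inl one_ne_zero)
      simpa using this
    have hev : ∀ᶠ k : ℕ in atTop, lam < c * ((1:ℝ≥0∞) - (2:ℝ≥0∞) ^ n * ((1 : ℝ≥0∞) -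
        volume (U ∩ closedBall x (cs h k)) / volume (closedBall x (cs h k)))) :=
      h3.eventually_const_lt hlam
    obtain ⟨k, hk⟩ := hev.exists
    -- notation
    set B := closedBall x (cs h k) with hB
    set V := volume (cell a h k (idx a h k x)) with hV
    set BB := volume B with hBB
    set I := volume (U ∩ B) with hI
    have hxcell : x ∈ cell a h k (idx a h k x) := mem_cell_idx hh hx' k
    have hcellB : cell a h k (idx a h k x) ⊆ B := by
      intro y hy
      rw [hB, mem_closedBall]
      rw [dist_pi_le_iff (cs_pos hh k).le]
      intro i
      obtain ⟨hy1, hy2⟩ := mem_cell.1 hy i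
      obtain ⟨hx1, hx2⟩ := mem_cell.1 hxcell i
      rw [Real.dist_eq, abs_sub_le_iff]
      constructor <;> linarith
    have hVne : V ≠ 0 := volume_cell_ne_zero a hh k _
    have hVnt : V ≠ ⊤ := volume_cell_ne_top a hh k _
    have hBBV : BB = 2 ^ n * V := by
      rw [hBB, hB, Real.volume_pi_closedBall x (cs_pos hh k).le, hV, volume_cell a hh k]
      rw [ENNReal.ofReal_pow (mul_nonneg (by norm_num) (cs_pos hh k).le), Fintype.card_fin]
      rw [ENNReal.ofReal_mul (by norm_num : (0:ℝ) ≤ 2)]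
      rw [mul_pow]
      norm_num
    have hBBne : BB ≠ 0 := by
      rw [hBBV]; exact mul_ne_zero (pow_ne_zero _ (by norm_num)) hVne
    have hBBnt : BB ≠ ⊤ := by
      rw [hBBV]; exact ENNReal.mul_ne_top (pow_ne_top ENNReal.ofNat_ne_top) hVnt
    have hIBB : I ≤ BB := measure_mono Set.inter_subset_right
    -- the subtraction identities
    have hD : BB - I = ((1:ℝ≥0∞) - I / BB) * BB := by
      rw [ENNReal.sub_mul (fun _ _ => hBBnt), one_mul, ENNReal.div_mul_cancel hBBne hBBnt]
    have hq : ((1:ℝ≥0∞) - (2:ℝ≥0∞) ^ n * ((1:ℝ≥0∞) - I / BB)) * V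
        = V - (BB - I) := by
      rw [ENNReal.sub_mul (fun _ _ => hVnt), one_mul, hD, hBBV]
      ring_nf
    -- volume comparison
    have hvol1 : V ≤ volume (cell a h k (idx a h k x) ∩ U) + (BB - I) := by
      have e1 : volume (cell a h k (idx a h k x) ∩ U)
          + volume (cell a h k (idx a h k x) \ U) = V := measure_inter_add_diff _ hU
      have e2 : volume (cell a h k (idx a h k x) \ U) ≤ BB - I := by
        have hsub2 : cell a h k (idx a h k x) \ U ⊆ B \ (U ∩ B) := by
          intro y hy
          exact ⟨hcellB hy.1, fun hc => hy.2 hc.1⟩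
        refine le_trans (measure_mono hsub2) ?_
        rw [measure_diff Set.inter_subset_right (hU.inter measurableSet_closedBall).nullMeasurableSet
          (hIBB.trans_lt (lt_top_iff_ne_top.2 hBBnt)).ne]
      calc V = volume (cell a h k (idx a h k x) ∩ U)
            + volume (cell a h k (idx a h k x) \ U) := e1.symm
        _ ≤ volume (cell a h k (idx a h k x) ∩ U) + (BB - I) := add_le_add_right e2 _
    have hvol2 : V - (BB - I) ≤ volume (cell a h k (idx a h k x) ∩ U) :=
      tsub_le_iff_right.2 hvol1
    -- integral lower bound
    have hint : c * volume (cell a h k (idx a h k x) ∩ U)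
        ≤ ∫⁻ y in cell a h k (idx a h k x), f y := by
      calc c * volume (cell a h k (idx a h k x) ∩ U)
          = ∫⁻ _ in cell a h k (idx a h k x) ∩ U, c := (setLIntegral_const _ c).symm
        _ ≤ ∫⁻ y in cell a h k (idx a h k x) ∩ U, f y :=
            setLIntegral_mono' ((measurableSet_cell a h k _).inter hU)
              (fun y hy => hcf y hy.2)
        _ ≤ ∫⁻ y in cell a h k (idx a h k x), f y := lintegral_mono_set Set.inter_subset_left
    -- conclude
    refine (mem_Omega hh).2 ⟨hUQ hxU, k, ?_⟩
    have hchain : c * ((1:ℝ≥0∞) - (2:ℝ≥0∞) ^ n * ((1:ℝ≥0∞) - I / BB)) * V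
        ≤ ∫⁻ y in cell a h k (idx a h k x), f y := by
      rw [mul_assoc, hq]
      exact le_trans (mul_le_mul_right hvol2 c) hint
    have : c * ((1:ℝ≥0∞) - (2:ℝ≥0∞) ^ n * ((1:ℝ≥0∞) - I / BB))
        ≤ avg a h f k (idx a h k x) := by
      rw [avg, ← hV]
      have hrw : c * ((1:ℝ≥0∞) - (2:ℝ≥0∞) ^ n * ((1:ℝ≥0∞) - I / BB))
          = c * ((1:ℝ≥0∞) - (2:ℝ≥0∞) ^ n * ((1:ℝ≥0∞) - I / BB)) * V / V := by
        rw [mul_div_assoc, ENNReal.div_self hVne hVnt, mul_one]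
      rw [hrw]
      exact ENNReal.div_le_div_right hchain V
    exact lt_of_lt_of_le hk this
  -- wrap up
  have hΩm := measurableSet_Omega a h f lam
  have hmeas : volume (U \ Omega a h f lam)
      = (volume.restrict U) (U \ Omega a h f lam) := by
    rw [Measure.restrict_apply (hU.diff hΩm)]
    rw [Set.inter_eq_left.2 Set.diff_subset]
  rw [hmeas]
  refine measure_mono_null ?_ (ae_iff.1 hbes)
  intro y hy
  simp only [Set.mem_setOf_eq]
  intro hT
  exact hy.2 (key y hy.1 hT)


/-! ### Step I : summation bound on high level sets -/

lemma stepI {a : Fin n → ℝ} {h : ℝ} (hh : 0 < h) {f : (Fin n → ℝ) → ℝ≥0∞}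
    (hWt : ∫⁻ x in cell a h 0 0, f x ≠ ⊤)
    {A : ℝ≥0∞}
    (hbd : ∫⁻ x in ccell a h 0 0, hlM ((ccell a h 0 0).indicator f) x
        ≤ A * ∫⁻ x in cell a h 0 0, f x)
    {m : ℕ} (hm : 1 ≤ m) :
    ∫⁻ x in Omega a h f (((2:ℝ≥0∞) ^ (n+1)) ^ m * avg a h f 0 0), f x
      ≤ 2 ^ (n+1) * A * (∫⁻ x in cell a h 0 0, f x) / m := by
  set W := ∫⁻ x in cell a h 0 0, f x with hW
  set σ := avg a h f 0 0 with hσ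
  set lam : ℕ → ℝ≥0∞ := fun k => ((2:ℝ≥0∞) ^ (n+1)) ^ k * σ with hlamdef
  set Om : ℕ → Set (Fin n → ℝ) := fun k => Omega a h f (lam k) with hOmdef
  set wk : ℕ → ℝ≥0∞ := fun k => ∫⁻ x in Om k, f x with hwkdef
  have hbase : (1:ℝ≥0∞) ≤ (2:ℝ≥0∞) ^ (n+1) := Left.one_le_pow_of_le one_le_two _
  have hlam_mono : ∀ {j j' : ℕ}, j ≤ j' → lam j ≤ lam j' := by
    intro j j' hj
    exact mul_le_mul_left (pow_le_pow_right₀ hbase hj) σ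
  have hOm_anti : ∀ {j j' : ℕ}, j ≤ j' → Om j' ⊆ Om j := by
    intro j j' hj
    exact Omega_antitone hh (hlam_mono hj)
  have hσle : ∀ k, σ ≤ lam k := by
    intro k
    calc σ = 1 * σ := (one_mul σ).symm
      _ ≤ ((2:ℝ≥0∞) ^ (n+1)) ^ k * σ := mul_le_mul_left (Left.one_le_pow_of_le hbase k) σ
    
  have hwk_anti : ∀ {j j' : ℕ}, j ≤ j' → wk j' ≤ wk j := by
    intro j j' hj
    exact lintegral_mono_set (hOm_anti hj)
  have hwkW : ∀ k, wk k ≤ W := fun k => lintegral_mono_set (Omega_subset_Q hh)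
  have hOmeas : ∀ k, MeasurableSet (Om k) := fun k => measurableSet_Omega a h f (lam k)
  -- single step estimate
  have hkey : ∀ k, wk k ≤ 2 ^ n * (lam k * volume (Om k \ Om (k+1))) + wk (k+1) / 2 := by
    intro k
    have h1 : wk k ≤ 2 ^ n * lam k * volume (Om k) := lintegral_Omega_le hh (hσle k)
    have h2 : volume (Om k) = volume (Om (k+1)) + volume (Om k \ Om (k+1)) := by
      have := measure_inter_add_diff (μ := volume) (Om k) (hOmeas (k+1))
      rw [Set.inter_eq_right.2 (hOm_anti (Nat.le_succ k))] at this
      exact this.symm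
    have h3 : 2 ^ n * lam k * volume (Om (k+1)) ≤ wk (k+1) / 2 := by
      rw [ENNReal.le_div_iff_mul_le (Or.inl two_ne_zero) (Or.inl ENNReal.ofNat_ne_top)]
      have h4 : lam (k+1) * volume (Om (k+1)) ≤ wk (k+1) := mul_volume_Omega_le hh (lam (k+1))
      have h5 : lam (k+1) = 2 ^ (n+1) * lam k := by
        rw [hlamdef]
        simp only []
        rw [pow_succ, mul_assoc]
        ring
      calc 2 ^ n * lam k * volume (Om (k+1)) * 2
          = lam (k+1) * volume (Om (k+1)) := by rw [h5, pow_succ]; ring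
        _ ≤ wk (k+1) := h4
    calc wk k ≤ 2 ^ n * lam k * volume (Om k) := h1
      _ = 2 ^ n * lam k * volume (Om (k+1)) + 2 ^ n * (lam k * volume (Om k \ Om (k+1))) := by
          rw [h2]; ring
      _ ≤ wk (k+1) / 2 + 2 ^ n * (lam k * volume (Om k \ Om (k+1))) := add_le_add_left h3 _
      _ = 2 ^ n * (lam k * volume (Om k \ Om (k+1))) + wk (k+1) / 2 := by ring
  -- Carleson sum
  have hsum1 : ∑ k ∈ Finset.Icc 1 m, lam k * volume (Om k \ Om (k+1)) ≤ A * W := by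
    set g : (Fin n → ℝ) → ℝ≥0∞ := fun x =>
      ∑ k ∈ Finset.Icc 1 m, (Om k \ Om (k+1)).indicator (fun _ => lam k) x with hg
    have hgle : ∀ x, g x ≤ hlM ((ccell a h 0 0).indicator f) x := by
      intro x
      by_cases hx : ∃ k ∈ Finset.Icc 1 m, x ∈ Om k \ Om (k+1)
      · obtain ⟨k, hk, hxk⟩ := hx
        have hsum : g x = lam k := by
          rw [hg]
          simp only []
          rw [Finset.sum_eq_single k]
          · exact Set.indicator_of_mem hxk _
          · intro j hj hjk
            refine Set.indicator_of_notMem ?_ _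
            intro hxj
            rcases lt_or_gt_of_ne hjk with hlt | hgt
            · exact hxj.2 (hOm_anti (Nat.succ_le_of_lt hlt) hxk.1)
            · exact hxk.2 (hOm_anti (Nat.succ_le_of_lt hgt) hxj.1)
          · intro hk'; exact absurd hk hk'
        rw [hsum]
        exact (lt_hlM_of_mem_Omega hh hxk.1).le
      · push_neg at hx
        have hsum : g x = 0 := by
          rw [hg]
          exact Finset.sum_eq_zero fun k hk => Set.indicator_of_notMem (hx k hk) _
        rw [hsum]
        exact zero_le
    have hgint : ∫⁻ x in cell a h 0 0, g x
        = ∑ k ∈ Finset.Icc 1 m, lam k * volume (Om k \ Om (k+1)) := by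
      rw [hg]
      rw [lintegral_finset_sum _ (fun k _ =>
        (measurable_const.indicator ((hOmeas k).diff (hOmeas (k+1)))))]
      refine Finset.sum_congr rfl fun k hk => ?_
      rw [lintegral_indicator ((hOmeas k).diff (hOmeas (k+1)))]
      rw [Measure.restrict_restrict ((hOmeas k).diff (hOmeas (k+1)))]
      rw [setLIntegral_const]
      congr 1
      rw [Set.inter_eq_left.2 (Set.diff_subset.trans (Omega_subset_Q hh))]
    calc ∑ k ∈ Finset.Icc 1 m, lam k * volume (Om k \ Om (k+1))
        = ∫⁻ x in cell a h 0 0, g x := hgint.symm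
      _ ≤ ∫⁻ x in cell a h 0 0, hlM ((ccell a h 0 0).indicator f) x :=
          setLIntegral_mono' (measurableSet_cell a h 0 0) (fun x _ => hgle x)
      _ ≤ ∫⁻ x in ccell a h 0 0, hlM ((ccell a h 0 0).indicator f) x :=
          lintegral_mono_set (cell_subset_ccell a h 0 0)
      _ ≤ A * W := hbd
  -- sum the key estimates
  set S := ∑ k ∈ Finset.Icc 1 m, wk k with hS
  have hSfin : S ≠ ⊤ := by
    have h7 : S ≤ ∑ _k ∈ Finset.Icc 1 m, W := Finset.sum_le_sum fun k _ => hwkW k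
    rw [Finset.sum_const, nsmul_eq_mul] at h7
    refine (lt_of_le_of_lt h7 ?_).ne
    exact lt_top_iff_ne_top.2 (ENNReal.mul_ne_top (ENNReal.natCast_ne_top _) hWt)
  have hS2 : S ≤ 2 ^ n * (A * W) + S / 2 := by
    calc S ≤ ∑ k ∈ Finset.Icc 1 m,
          (2 ^ n * (lam k * volume (Om k \ Om (k+1))) + wk (k+1) / 2) :=
          Finset.sum_le_sum fun k _ => hkey k
      _ = 2 ^ n * (∑ k ∈ Finset.Icc 1 m, lam k * volume (Om k \ Om (k+1)))
          + (∑ k ∈ Finset.Icc 1 m, wk (k+1)) / 2 := by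
          rw [Finset.sum_add_distrib, Finset.mul_sum]
          congr 1
          simp only [div_eq_mul_inv]
          rw [← Finset.sum_mul]
      _ ≤ 2 ^ n * (A * W) + S / 2 := by
          refine add_le_add (mul_le_mul_right hsum1 _) ?_
          refine ENNReal.div_le_div_right ?_ 2
          rw [hS]
          exact Finset.sum_le_sum fun k _ => hwk_anti (Nat.le_succ k)
  have hShalf : S / 2 ≤ 2 ^ n * (A * W) := by
    have h6 : S - S / 2 ≤ 2 ^ n * (A * W) := tsub_le_iff_right.2 hS2
    rwa [ENNReal.sub_half hSfin] at h6
  have hSle : S ≤ 2 ^ (n+1) * A * W := by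
    have := (ENNReal.div_le_iff_le_mul (Or.inl two_ne_zero) (Or.inl ENNReal.ofNat_ne_top)).1 hShalf
    calc S ≤ 2 ^ n * (A * W) * 2 := this
      _ = 2 ^ (n+1) * A * W := by rw [pow_succ]; ring
  -- wk m ≤ S / m
  have hmS : (m : ℝ≥0∞) * wk m ≤ S := by
    have : ∑ _k ∈ Finset.Icc 1 m, wk m ≤ S := Finset.sum_le_sum fun k hk =>
      hwk_anti (Finset.mem_Icc.1 hk).2
    rw [Finset.sum_const, Nat.card_Icc] at this
    simpa [Nat.add_sub_cancel, smul_eq_mul] using this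
  have hmne : (m:ℝ≥0∞) ≠ 0 := Nat.cast_ne_zero.2 (by omega)
  have : wk m ≤ S / m := by
    rw [ENNReal.le_div_iff_mul_le (Or.inl hmne) (Or.inl (ENNReal.natCast_ne_top m))]
    rw [mul_comm]
    exact hmS
  exact this.trans (ENNReal.div_le_div_right hSle _)


/-! ### Step II : the (1/2, beta0) property -/

def mA (n : ℕ) (A : ℝ≥0∞) : ℕ := max 1 (Nat.ceil ((2:ℝ) ^ (n+3) * A.toReal))

def beta0 (n : ℕ) (A : ℝ≥0∞) : ℝ≥0∞ := (2⁻¹ : ℝ≥0∞) ^ (3 + (n+1) * mA n A)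

def beta1 (n : ℕ) (A : ℝ≥0∞) : ℝ≥0∞ := (2⁻¹ : ℝ≥0∞) ^ (n + 3 + (n+1) * mA n A)

lemma beta0_eq (n : ℕ) (A : ℝ≥0∞) : beta0 n A = 2 ^ n * beta1 n A := by
  rw [beta0, beta1]
  have h1 : (2⁻¹:ℝ≥0∞) ^ (n + 3 + (n+1) * mA n A)
      = (2⁻¹:ℝ≥0∞) ^ n * (2⁻¹:ℝ≥0∞) ^ (3 + (n+1) * mA n A) := by
    rw [← pow_add]; congr 1; omega
  rw [h1, ← mul_assoc, ← mul_pow, ENNReal.mul_inv_cancel two_ne_zero ENNReal.ofNat_ne_top, one_pow, one_mul]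

lemma stepII {f : (Fin n → ℝ) → ℝ≥0∞} (hfm : Measurable f) {A : ℝ≥0∞}
    (hA1 : 1 ≤ A) (hAt : A ≠ ⊤)
    (Hpos : ∀ (a : Fin n → ℝ) (h : ℝ), 0 < h → ∫⁻ x in cell a h 0 0, f x ≠ 0)
    (Hfin : ∀ (a : Fin n → ℝ) (h : ℝ), 0 < h → ∫⁻ x in cell a h 0 0, f x ≠ ⊤)
    (HA : ∀ (a : Fin n → ℝ) (h : ℝ), 0 < h →
      ∫⁻ x in ccell a h 0 0, hlM ((ccell a h 0 0).indicator f) x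
        ≤ A * ∫⁻ x in cell a h 0 0, f x)
    (a : Fin n → ℝ) (h : ℝ) (hh : 0 < h)
    {S : Set (Fin n → ℝ)} (hS : MeasurableSet S) (hSQ : S ⊆ ccell a h 0 0)
    (hvol : volume S ≤ beta0 n A * volume (cell a h 0 0)) :
    ∫⁻ x in S, f x ≤ (∫⁻ x in cell a h 0 0, f x) / 2 := by
  set W := ∫⁻ x in cell a h 0 0, f x with hWdef
  have hW0 : W ≠ 0 := Hpos a h hh
  have hWt : W ≠ ⊤ := Hfin a h hh
  set σ := avg a h f 0 0 with hσdef
  have hσ0 : σ ≠ 0 := by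
    rw [hσdef, avg]
    intro hc
    rcases ENNReal.div_eq_zero_iff.1 hc with hc1 | hc2
    · exact hW0 hc1
    · exact volume_cell_ne_top a hh 0 0 hc2
  have hσt : σ ≠ ⊤ :=
    (ENNReal.div_lt_top hWt (volume_cell_ne_zero a hh 0 0)).ne
  set m := mA n A with hmdef
  have hm1 : 1 ≤ m := le_max_left _ _
  set lam := ((2:ℝ≥0∞) ^ (n+1)) ^ m * σ with hlamdef
  have hlam0 : lam ≠ 0 := mul_ne_zero (pow_ne_zero _ (pow_ne_zero _ two_ne_zero)) hσ0
  have hlamt : lam ≠ ⊤ := ENNReal.mul_ne_top (pow_ne_top (pow_ne_top ENNReal.ofNat_ne_top)) hσt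
  set Om := Omega a h f lam with hOmdef
  set U := cell a h 0 0 ∩ f ⁻¹' (Set.Ioi (2 * lam)) with hUdef
  have hU : MeasurableSet U := (measurableSet_cell a h 0 0).inter (hfm measurableSet_Ioi)
  have hUOm : volume (U \ Om) = 0 := by
    refine key_density hh hU Set.inter_subset_left (fun x hx => (Set.mem_Ioi.1 hx.2).le) ?_
    calc lam = 1 * lam := (one_mul lam).symm
      _ < 2 * lam := ENNReal.mul_lt_mul_left hlam0 hlamt one_lt_two
  -- split S
  have hsplit : ∫⁻ x in S, f x ≤ (∫⁻ x in S \ Om, f x) + ∫⁻ x in Om, f x := by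
    refine le_trans (lintegral_mono_set ?_) (lintegral_union_le f (S \ Om) Om)
    intro x hx
    by_cases hxo : x ∈ Om
    · exact Set.mem_union_right _ hxo
    · exact Set.mem_union_left _ ⟨hx, hxo⟩
  -- bound on Om
  have hOmbd : ∫⁻ x in Om, f x ≤ W / 4 := by
    have h1 : ∫⁻ x in Om, f x ≤ 2 ^ (n+1) * A * W / m :=
      stepI hh hWt (HA a h hh) hm1
    have hmge : (2:ℝ≥0∞) ^ (n+3) * A ≤ (m : ℝ≥0∞) := by
      have hA_real : A = ENNReal.ofReal A.toReal := (ENNReal.ofReal_toReal hAt).symm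
      have h2 : ((2:ℝ) ^ (n+3) * A.toReal) ≤ (m : ℝ) := by
        refine le_trans (Nat.le_ceil _) ?_
        have h2' : Nat.ceil ((2:ℝ) ^ (n+3) * A.toReal) ≤ m := by
          rw [hmdef, mA]; exact le_max_right _ _
        exact_mod_cast h2'
      calc (2:ℝ≥0∞) ^ (n+3) * A = ENNReal.ofReal ((2:ℝ) ^ (n+3) * A.toReal) := by
            rw [ENNReal.ofReal_mul (by positivity), ENNReal.ofReal_pow (by norm_num)]
            rw [← hA_real]
            norm_num
        _ ≤ ENNReal.ofReal (m : ℝ) := ENNReal.ofReal_le_ofReal h2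
        _ = (m : ℝ≥0∞) := ENNReal.ofReal_natCast m
    have h3 : (2:ℝ≥0∞) ^ (n+1) * A * W / m ≤ 2 ^ (n+1) * A * W / ((2:ℝ≥0∞) ^ (n+3) * A) :=
      ENNReal.div_le_div_left hmge _
    have hden0 : (2:ℝ≥0∞) ^ (n+1) * A ≠ 0 :=
      mul_ne_zero (pow_ne_zero _ two_ne_zero) (fun hc => by simp [hc] at hA1)
    have hdent : (2:ℝ≥0∞) ^ (n+1) * A ≠ ⊤ := ENNReal.mul_ne_top (pow_ne_top ENNReal.ofNat_ne_top) hAt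
    have h4 : (2:ℝ≥0∞) ^ (n+1) * A * W / ((2:ℝ≥0∞) ^ (n+3) * A) = W / 4 := by
      have hre : (2:ℝ≥0∞) ^ (n+3) * A = ((2:ℝ≥0∞) ^ (n+1) * A) * 4 := by
        rw [show n + 3 = n + 1 + 2 by omega, pow_add,
          show ((2:ℝ≥0∞)) ^ 2 = 4 by norm_num]
        ring
      rw [hre, ENNReal.mul_div_mul_left W 4 hden0 hdent]
    exact h1.trans (h3.trans_eq h4)
  -- bound off Om
  have hoffbd : ∫⁻ x in S \ Om, f x ≤ W / 4 := by
    set N := (ccell a h 0 0 \ cell a h 0 0) ∪ (U \ Om) with hNdef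
    have hN0 : volume N = 0 :=
      measure_union_null (volume_ccell_diff_cell a h 0 0) hUOm
    have hNmeas : MeasurableSet N :=
      ((measurableSet_ccell a h 0 0).diff (measurableSet_cell a h 0 0)).union
        (hU.diff (measurableSet_Omega a h f lam))
    set G := (S \ Om) \ N with hGdef
    have hGmeas : MeasurableSet G :=
      ((hS.diff (measurableSet_Omega a h f lam)).diff hNmeas)
    have hsub : S \ Om ⊆ G ∪ N := by
      intro x hx
      by_cases hxn : x ∈ N
      · exact Set.mem_union_right _ hxn
      · exact Set.mem_union_left _ ⟨hx, hxn⟩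
    have hGf : ∀ x ∈ G, f x ≤ 2 * lam := by
      rintro x ⟨⟨hxS, hxOm⟩, hxN⟩
      rw [hNdef] at hxN
      simp only [Set.mem_union, not_or] at hxN
      have hxcell : x ∈ cell a h 0 0 := by
        by_contra hc
        exact hxN.1 ⟨hSQ hxS, hc⟩
      have hxU : x ∉ U := fun hxU => hxN.2 ⟨hxU, hxOm⟩
      rw [hUdef] at hxU
      by_contra hc
      exact hxU ⟨hxcell, Set.mem_Ioi.2 (lt_of_not_ge hc)⟩
    calc ∫⁻ x in S \ Om, f x ≤ ∫⁻ x in G ∪ N, f x := lintegral_mono_set hsub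
      _ ≤ (∫⁻ x in G, f x) + ∫⁻ x in N, f x := lintegral_union_le f G N
      _ = ∫⁻ x in G, f x := by rw [setLIntegral_measure_zero N f hN0, add_zero]
      _ ≤ ∫⁻ _x in G, 2 * lam := setLIntegral_mono' hGmeas hGf
      _ = 2 * lam * volume G := setLIntegral_const G (2 * lam)
      _ ≤ 2 * lam * volume S := mul_le_mul_right (measure_mono (fun x hx => hx.1.1)) _
      _ ≤ 2 * lam * (beta0 n A * volume (cell a h 0 0)) := mul_le_mul_right hvol _
      _ = (2 * ((2:ℝ≥0∞) ^ (n+1)) ^ m * beta0 n A) * (σ * volume (cell a h 0 0)) := by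
          rw [hlamdef]; ring
      _ = (2 * ((2:ℝ≥0∞) ^ (n+1)) ^ m * beta0 n A) * W := by
          rw [avg_mul_volume hh f 0 0]
      _ = W / 4 := by
          have hcoef : 2 * ((2:ℝ≥0∞) ^ (n+1)) ^ m * beta0 n A = 4⁻¹ := by
            rw [beta0, ← hmdef, ← pow_mul, pow_add]
            have hcancel : (2:ℝ≥0∞) ^ ((n+1)*m) * (2⁻¹:ℝ≥0∞) ^ ((n+1)*m) = 1 := by
              rw [← mul_pow, ENNReal.mul_inv_cancel two_ne_zero ENNReal.ofNat_ne_top, one_pow]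
            calc 2 * (2:ℝ≥0∞) ^ ((n+1)*m) * ((2⁻¹:ℝ≥0∞) ^ 3 * (2⁻¹:ℝ≥0∞) ^ ((n+1)*m))
                = (2 * (2⁻¹:ℝ≥0∞) ^ 3) * ((2:ℝ≥0∞) ^ ((n+1)*m) * (2⁻¹:ℝ≥0∞) ^ ((n+1)*m)) := by
                  ring
              _ = 2 * (2⁻¹:ℝ≥0∞) ^ 3 := by rw [hcancel, mul_one]
              _ = 4⁻¹ := by
                  rw [← ENNReal.inv_pow]
                  rw [show (2:ℝ≥0∞) ^ 3 = 2 * 4 by norm_num]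
                  rw [ENNReal.mul_inv (Or.inl two_ne_zero) (Or.inl ENNReal.ofNat_ne_top), ← mul_assoc]
                  rw [ENNReal.mul_inv_cancel two_ne_zero ENNReal.ofNat_ne_top, one_mul]
          rw [hcoef, ENNReal.div_eq_inv_mul]
  calc ∫⁻ x in S, f x ≤ (∫⁻ x in S \ Om, f x) + ∫⁻ x in Om, f x := hsplit
    _ ≤ W / 4 + W / 4 := add_le_add hoffbd hOmbd
    _ = W / 2 := by
      rw [ENNReal.div_add_div_same]
      rw [show (4:ℝ≥0∞) = 2 * 2 by norm_num, show W + W = 2 * W from (two_mul W).symm]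
      rw [ENNReal.mul_div_mul_left W 2 two_ne_zero ENNReal.ofNat_ne_top]


/-! ### Step III : iteration -/

lemma mem_ccell {a : Fin n → ℝ} {h : ℝ} {k : ℕ} {v : Fin n → ℕ} {x : Fin n → ℝ} :
    x ∈ ccell a h k v ↔ ∀ i, a i + v i * cs h k ≤ x i ∧ x i ≤ a i + (v i + 1) * cs h k := by
  simp only [ccell, Set.mem_pi, Set.mem_univ, Set.mem_Icc, forall_true_left]

lemma cell_rebase (a : Fin n → ℝ) (h : ℝ) (k : ℕ) (v : Fin n → ℕ) :
    cell a h k v = cell (fun i => a i + v i * cs h k) (cs h k) 0 0 := by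
  ext x
  rw [mem_cell, mem_Q_iff]
  refine forall_congr' fun i => ?_
  have hr : (((v i):ℝ) + 1) * cs h k = v i * cs h k + cs h k := by ring
  constructor
  · rintro ⟨h1, h2⟩; exact ⟨h1, by linarith⟩
  · rintro ⟨h1, h2⟩; exact ⟨h1, by linarith⟩

lemma ccell_rebase (a : Fin n → ℝ) (h : ℝ) (k : ℕ) (v : Fin n → ℕ) :
    ccell a h k v = ccell (fun i => a i + v i * cs h k) (cs h k) 0 0 := by
  ext x
  rw [mem_ccell, mem_ccell]
  refine forall_congr' fun i => ?_
  simp only [Pi.zero_apply, Nat.cast_zero, zero_mul, zero_add, cs_zero, zero_add, add_zero]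
  constructor
  · rintro ⟨h1, h2⟩
    exact ⟨h1, by push_cast at h2 ⊢; linarith⟩
  · rintro ⟨h1, h2⟩
    exact ⟨h1, by push_cast at h2 ⊢; linarith⟩

lemma setLIntegral_ccell (a : Fin n → ℝ) {h : ℝ} (hh : 0 < h) (k : ℕ) (v : Fin n → ℕ)
    (g : (Fin n → ℝ) → ℝ≥0∞) :
    ∫⁻ x in ccell a h k v, g x = ∫⁻ x in cell a h k v, g x := by
  refine le_antisymm ?_ (lintegral_mono_set (cell_subset_ccell a h k v))
  have hsub : ccell a h k v ⊆ cell a h k v ∪ (ccell a h k v \ cell a h k v) := by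
    intro x hx
    by_cases hxc : x ∈ cell a h k v
    · exact Set.mem_union_left _ hxc
    · exact Set.mem_union_right _ ⟨hx, hxc⟩
  refine le_trans (lintegral_mono_set hsub) ?_
  refine le_trans (lintegral_union_le _ _ _) ?_
  rw [setLIntegral_measure_zero _ _ (volume_ccell_diff_cell a h k v), add_zero]

lemma stepIII {f : (Fin n → ℝ) → ℝ≥0∞} (hfm : Measurable f) {A : ℝ≥0∞}
    (hA1 : 1 ≤ A) (hAt : A ≠ ⊤)
    (Hpos : ∀ (a : Fin n → ℝ) (h : ℝ), 0 < h → ∫⁻ x in cell a h 0 0, f x ≠ 0)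
    (Hfin : ∀ (a : Fin n → ℝ) (h : ℝ), 0 < h → ∫⁻ x in cell a h 0 0, f x ≠ ⊤)
    (HA : ∀ (a : Fin n → ℝ) (h : ℝ), 0 < h →
      ∫⁻ x in ccell a h 0 0, hlM ((ccell a h 0 0).indicator f) x
        ≤ A * ∫⁻ x in cell a h 0 0, f x)
    (a : Fin n → ℝ) (h : ℝ) (hh : 0 < h) (J : ℕ)
    {E : Set (Fin n → ℝ)} (hE : MeasurableSet E) (hEQ : E ⊆ ccell a h 0 0)
    (hvol : volume E ≤ beta1 n A ^ J * volume (cell a h 0 0)) :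
    ∫⁻ x in E, f x ≤ (2⁻¹ : ℝ≥0∞) ^ J * ∫⁻ x in cell a h 0 0, f x := by
  induction J generalizing E with
  | zero =>
    simp only [pow_zero, one_mul]
    calc ∫⁻ x in E, f x ≤ ∫⁻ x in ccell a h 0 0, f x := lintegral_mono_set hEQ
      _ = ∫⁻ x in cell a h 0 0, f x := setLIntegral_ccell a hh 0 0 f
  | succ J ih =>
    set W := ∫⁻ x in cell a h 0 0, f x with hWdef
    set Vc := volume (cell a h 0 0) with hVcdef
    set b := beta1 n A with hbdef
    have hb0 : b ≠ 0 := pow_ne_zero _ (ENNReal.inv_ne_zero.2 ENNReal.ofNat_ne_top)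
    have hbt : b ≠ ⊤ := pow_ne_top (ENNReal.inv_ne_top.2 two_ne_zero)
    have hb1 : b < 1 := by
      rw [hbdef, beta1]
      refine pow_lt_one₀ zero_le ?_ (by omega)
      rw [ENNReal.inv_lt_one]
      exact one_lt_two
    set U := E ∩ cell a h 0 0 with hUdef
    have hUmeas : MeasurableSet U := hE.inter (measurableSet_cell a h 0 0)
    have hvolU : volume U ≤ b ^ (J+1) * Vc :=
      le_trans (measure_mono Set.inter_subset_left) hvol
    -- reduce E to U
    have hEtoU : ∫⁻ x in E, f x ≤ ∫⁻ x in U, f x := by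
      have hsub : E ⊆ U ∪ (ccell a h 0 0 \ cell a h 0 0) := by
        intro x hx
        by_cases hxc : x ∈ cell a h 0 0
        · exact Set.mem_union_left _ ⟨hx, hxc⟩
        · exact Set.mem_union_right _ ⟨hEQ hx, hxc⟩
      refine le_trans (lintegral_mono_set hsub) ?_
      refine le_trans (lintegral_union_le _ _ _) ?_
      rw [setLIntegral_measure_zero _ _ (volume_ccell_diff_cell a h 0 0), add_zero]
    -- indicator weight
    set g : (Fin n → ℝ) → ℝ≥0∞ := U.indicator (fun _ => 1) with hgdef
    have hgm : Measurable g := measurable_const.indicator hUmeas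
    have hgint : ∀ (k : ℕ) (v : Fin n → ℕ),
        ∫⁻ x in cell a h k v, g x = volume (U ∩ cell a h k v) := by
      intro k v
      rw [hgdef, lintegral_indicator hUmeas, Measure.restrict_restrict hUmeas,
        setLIntegral_one]
    have htop : avg a h g 0 0 ≤ b := by
      rw [avg, hgint 0 0]
      refine ENNReal.div_le_of_le_mul ?_
      calc volume (U ∩ cell a h 0 0) ≤ volume U := measure_mono Set.inter_subset_left
        _ ≤ b ^ (J+1) * Vc := hvolU
        _ ≤ b * Vc := by
            refine mul_le_mul_left ?_ Vc
            calc b ^ (J+1) = b * b ^ J := by rw [pow_succ]; ring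
              _ ≤ b * 1 := mul_le_mul_right (pow_le_one₀ zero_le hb1.le) b
              _ = b := mul_one b
    set Om := Omega a h g b with hOmdef
    have hOmmeas : MeasurableSet Om := measurableSet_Omega a h g b
    have hdens : volume (U \ Om) = 0 := by
      refine key_density hh hUmeas Set.inter_subset_right ?_ hb1
      intro x hx
      rw [hgdef, Set.indicator_of_mem hx]
    -- from U into Om
    have hUOm : ∫⁻ x in U, f x ≤ ∫⁻ x in Om, U.indicator f x := by
      have hsub : U ⊆ (U ∩ Om) ∪ (U \ Om) := by
        intro x hx
        by_cases hxo : x ∈ Om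
        · exact Set.mem_union_left _ ⟨hx, hxo⟩
        · exact Set.mem_union_right _ ⟨hx, hxo⟩
      refine le_trans (lintegral_mono_set hsub) ?_
      refine le_trans (lintegral_union_le _ _ _) ?_
      rw [setLIntegral_measure_zero _ _ hdens, add_zero]
      rw [lintegral_indicator hUmeas, Measure.restrict_restrict hUmeas]
    -- per stopping cell
    have hcellbd : ∀ p : {p : ℕ × (Fin n → ℕ) // Stop a h g b p},
        ∫⁻ x in cell a h p.1.1 p.1.2, U.indicator f x
          ≤ (∫⁻ x in cell a h p.1.1 p.1.2, f x) / 2 := by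
      rintro ⟨⟨k, v⟩, hp⟩
      have hvolS : volume (U ∩ cell a h k v) ≤ beta0 n A * volume (cell a h k v) := by
        have h1 := stop_cell_bound hh htop hp
        rw [hgint k v] at h1
        calc volume (U ∩ cell a h k v) ≤ 2 ^ n * b * volume (cell a h k v) := h1
          _ = beta0 n A * volume (cell a h k v) := by rw [hbdef, ← beta0_eq]
      have hind : ∫⁻ x in cell a h k v, U.indicator f x = ∫⁻ x in U ∩ cell a h k v, f x := by
        rw [lintegral_indicator hUmeas, Measure.restrict_restrict hUmeas]
      rw [hind]
      have happ := stepII hfm hA1 hAt Hpos Hfin HA (fun i => a i + v i * cs h k) (cs h k)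
        (cs_pos hh k) (hS := hUmeas.inter (measurableSet_cell a h k v))
        (S := U ∩ cell a h k v) ?_ ?_
      · rw [← cell_rebase] at happ
        exact happ
      · rw [← ccell_rebase]
        exact Set.inter_subset_right.trans (cell_subset_ccell a h k v)
      · rw [← cell_rebase]
        exact hvolS
    -- sum up
    have hsum : ∫⁻ x in Om, U.indicator f x ≤ (∫⁻ x in Om, f x) / 2 := by
      rw [lintegral_Omega hh b (U.indicator f), lintegral_Omega hh b f]
      rw [div_eq_mul_inv, ← ENNReal.tsum_mul_right]
      refine ENNReal.tsum_le_tsum fun p => ?_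
      rw [← div_eq_mul_inv]
      exact hcellbd p
    -- volume of Om and induction
    have hvolOm : volume Om ≤ b ^ J * Vc := by
      have h1 : b * volume Om ≤ ∫⁻ x in Om, g x := mul_volume_Omega_le hh b
      have h2 : ∫⁻ x in Om, g x ≤ volume U := by
        rw [hgdef, lintegral_indicator hUmeas, Measure.restrict_restrict hUmeas,
          setLIntegral_one]
        exact measure_mono Set.inter_subset_left
      have h3 : b * volume Om ≤ b * (b ^ J * Vc) := by
        refine le_trans h1 (le_trans h2 ?_)
        calc volume U ≤ b ^ (J+1) * Vc := hvolU
          _ = b * (b ^ J * Vc) := by rw [pow_succ]; ring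
      exact (ENNReal.mul_le_mul_iff_right hb0 hbt).1 h3
    have hOmQ : Om ⊆ ccell a h 0 0 :=
      (Omega_subset_Q hh).trans (cell_subset_ccell a h 0 0)
    have hih := ih hOmmeas hOmQ hvolOm
    calc ∫⁻ x in E, f x ≤ ∫⁻ x in U, f x := hEtoU
      _ ≤ ∫⁻ x in Om, U.indicator f x := hUOm
      _ ≤ (∫⁻ x in Om, f x) / 2 := hsum
      _ ≤ ((2⁻¹:ℝ≥0∞) ^ J * W) / 2 := ENNReal.div_le_div_right hih 2
      _ = (2⁻¹:ℝ≥0∞) ^ (J+1) * W := by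
          rw [div_eq_mul_inv, pow_succ]
          ring


/-! ### Final assembly -/

lemma ccell_zero (a : Fin n → ℝ) (h : ℝ) :
    ccell a h 0 0 = {x | ∀ i, a i ≤ x i ∧ x i ≤ a i + h} := by
  ext x
  rw [mem_ccell]
  simp only [Set.mem_setOf_eq]
  refine forall_congr' fun i => ?_
  simp [cs_zero]

lemma isCompact_ccell (a : Fin n → ℝ) (h : ℝ) (k : ℕ) (v : Fin n → ℕ) :
    IsCompact (ccell a h k v) :=
  isCompact_univ_pi fun _ => isCompact_Icc

end AinfAux
end AinfAux

section MainProof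
open MeasureTheory ENNReal Set Filter AinfAux

theorem Ainfty_measure_decay' (n : ℕ) :
    ∃ τ : ℝ, 0 < τ ∧
      ∀ w : (Fin n → ℝ) → ℝ, IsWeight w → aInfConst w ≠ ∞ →
        ∀ Q : Set (Fin n → ℝ), IsCube Q →
          ∀ E : Set (Fin n → ℝ), MeasurableSet E → E ⊆ Q →
            wMeas w E / wMeas w Q ≤
              2 * (MeasureTheory.volume E / MeasureTheory.volume Q) ^
                (1 / (1 + τ * (aInfConst w).toReal)) := by
  classical
  refine ⟨(2*n+3 : ℝ) + (n+1) * 2^(n+3), by positivity, ?_⟩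
  intro w hw hAt Q hQ E hE hEQ
  obtain ⟨aq, hq, hhq, rfl⟩ := hQ
  rw [show {x | ∀ i, aq i ≤ x i ∧ x i ≤ aq i + hq} = ccell aq hq 0 0 from
    (ccell_zero aq hq).symm] at hEQ ⊢
  -- measurable representative
  have hwm : AEMeasurable (fun x => ENNReal.ofReal (w x)) volume :=
    ENNReal.measurable_ofReal.comp_aemeasurable hw.1.aestronglyMeasurable.aemeasurable
  set f := hwm.mk _ with hfdef
  have hfm : Measurable f := hwm.measurable_mk
  have hfeq : (fun x => ENNReal.ofReal (w x)) =ᵐ[volume] f := hwm.ae_eq_mk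
  have hint_eq : ∀ s : Set (Fin n → ℝ),
      ∫⁻ x in s, ENNReal.ofReal (w x) = ∫⁻ x in s, f x :=
    fun s => lintegral_congr_ae (ae_restrict_of_ae hfeq)
  have hind_eq : ∀ S : Set (Fin n → ℝ),
      (S.indicator fun y => ENNReal.ofReal (w y)) =ᵐ[volume] S.indicator f := by
    intro S
    refine hfeq.mono fun y hy => ?_
    rw [Set.indicator_apply, Set.indicator_apply]
    split
    · exact hy
    · rfl
  have hhlM_eq : ∀ (S : Set (Fin n → ℝ)) (x : Fin n → ℝ),
      hlM (S.indicator fun y => ENNReal.ofReal (w y)) x = hlM (S.indicator f) x := by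
    intro S x
    rw [hlM, hlM]
    refine iSup_congr fun P => iSup_congr fun _ => iSup_congr fun _ => ?_
    rw [cubeAvg, cubeAvg]
    congr 1
    exact lintegral_congr_ae (ae_restrict_of_ae (hind_eq S))
  -- weight facts on cubes
  have Hfin : ∀ (a : Fin n → ℝ) (h : ℝ), 0 < h → ∫⁻ x in cell a h 0 0, f x ≠ ⊤ := by
    intro a h hh
    have hio : IntegrableOn w (ccell a h 0 0) volume :=
      hw.1.integrableOn_isCompact (isCompact_ccell a h 0 0)
    have hlt : ∫⁻ x in ccell a h 0 0, ENNReal.ofReal (w x) < ⊤ := hio.lintegral_lt_top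
    rw [hint_eq, setLIntegral_ccell a hh 0 0 f] at hlt
    exact hlt.ne
  have Hpos : ∀ (a : Fin n → ℝ) (h : ℝ), 0 < h → ∫⁻ x in cell a h 0 0, f x ≠ 0 := by
    intro a h hh hc
    have h1 : ∀ᵐ x ∂(volume.restrict (cell a h 0 0)), f x = 0 :=
      (lintegral_eq_zero_iff hfm).1 hc
    have h2 : ∀ᵐ x ∂(volume.restrict (cell a h 0 0)), (False : Prop) := by
      filter_upwards [h1, ae_restrict_of_ae hfeq, ae_restrict_of_ae hw.2] with x hx1 hx2 hx3
      rw [← hx2] at hx1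
      rw [ENNReal.ofReal_eq_zero] at hx1
      exact absurd hx3 (not_lt.2 hx1)
    have h3 := ae_iff.1 h2
    simp only [not_false_iff, Set.setOf_true] at h3
    rw [Measure.restrict_apply_univ] at h3
    exact volume_cell_ne_zero a hh 0 0 h3
  set 𝒜 := aInfConst w with h𝒜def
  have HwQ : ∀ (a : Fin n → ℝ) (h : ℝ), 0 < h →
      wMeas w (ccell a h 0 0) = ∫⁻ x in cell a h 0 0, f x := by
    intro a h hh
    rw [wMeas, hint_eq, setLIntegral_ccell a hh 0 0 f]
  have HA : ∀ (a : Fin n → ℝ) (h : ℝ), 0 < h →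
      ∫⁻ x in ccell a h 0 0, hlM ((ccell a h 0 0).indicator f) x
        ≤ 𝒜 * ∫⁻ x in cell a h 0 0, f x := by
    intro a h hh
    have hterm : (∫⁻ x in ccell a h 0 0,
        hlM ((ccell a h 0 0).indicator fun y => ENNReal.ofReal (w y)) x)
          / wMeas w (ccell a h 0 0) ≤ 𝒜 := by
      rw [h𝒜def, aInfConst]
      refine le_trans (le_iSup (fun _ : IsCube (ccell a h 0 0) =>
        (∫⁻ x in ccell a h 0 0,
          hlM ((ccell a h 0 0).indicator fun y => ENNReal.ofReal (w y)) x)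
            / wMeas w (ccell a h 0 0)) (isCube_ccell a hh 0 0)) ?_
      exact le_iSup (fun Q : Set (Fin n → ℝ) => ⨆ (_ : IsCube Q),
        (∫⁻ x in Q, hlM (Q.indicator fun y => ENNReal.ofReal (w y)) x) / wMeas w Q)
        (ccell a h 0 0)
    have hQ0 : wMeas w (ccell a h 0 0) ≠ 0 := by
      rw [HwQ a h hh]; exact Hpos a h hh
    have hQt : wMeas w (ccell a h 0 0) ≠ ⊤ := by
      rw [HwQ a h hh]; exact Hfin a h hh
    have h2 : ∫⁻ x in ccell a h 0 0,
        hlM ((ccell a h 0 0).indicator fun y => ENNReal.ofReal (w y)) x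
          ≤ 𝒜 * wMeas w (ccell a h 0 0) := by
      have h3 := mul_le_mul_left hterm (wMeas w (ccell a h 0 0))
      rwa [ENNReal.div_mul_cancel hQ0 hQt] at h3
    have h4 : ∫⁻ x in ccell a h 0 0, hlM ((ccell a h 0 0).indicator f) x
        = ∫⁻ x in ccell a h 0 0,
            hlM ((ccell a h 0 0).indicator fun y => ENNReal.ofReal (w y)) x :=
      lintegral_congr fun x => (hhlM_eq (ccell a h 0 0) x).symm
    rw [h4, ← HwQ a h hh]
    exact h2
  -- 1 ≤ 𝒜
  have h𝒜1 : 1 ≤ 𝒜 := by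
    set P := ccell aq hq 0 0 with hPdef
    have hQ0 : wMeas w P ≠ 0 := by rw [hPdef, HwQ aq hq hhq]; exact Hpos aq hq hhq
    have hQt : wMeas w P ≠ ⊤ := by rw [hPdef, HwQ aq hq hhq]; exact Hfin aq hq hhq
    have hlow : ∀ x ∈ P, wMeas w P / volume P
        ≤ hlM (P.indicator fun y => ENNReal.ofReal (w y)) x := by
      intro x hx
      have havg : cubeAvg (P.indicator fun y => ENNReal.ofReal (w y)) P
          = wMeas w P / volume P := by
        rw [cubeAvg, wMeas]
        congr 1
        refine setLIntegral_congr_fun (measurableSet_ccell aq hq 0 0) ?_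
        exact fun y hy => Set.indicator_of_mem hy _
      rw [← havg, hlM]
      exact le_iSup_of_le P (le_iSup_of_le (isCube_ccell aq hhq 0 0)
        (le_iSup_of_le hx le_rfl))
    have hint : wMeas w P ≤ ∫⁻ x in P,
        hlM (P.indicator fun y => ENNReal.ofReal (w y)) x := by
      have h5 : ∫⁻ _x in P, (wMeas w P / volume P) ≤ ∫⁻ x in P,
          hlM (P.indicator fun y => ENNReal.ofReal (w y)) x :=
        setLIntegral_mono' (measurableSet_ccell aq hq 0 0) hlow
      rw [setLIntegral_const] at h5
      have hvol : volume P = volume (cell aq hq 0 0) := by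
        rw [hPdef, volume_ccell aq hhq 0 0, volume_cell aq hhq 0 0]
      rw [hvol, ENNReal.div_mul_cancel (volume_cell_ne_zero aq hhq 0 0)
        (volume_cell_ne_top aq hhq 0 0)] at h5
      exact h5
    calc (1:ℝ≥0∞) = wMeas w P / wMeas w P := (ENNReal.div_self hQ0 hQt).symm
      _ ≤ (∫⁻ x in P, hlM (P.indicator fun y => ENNReal.ofReal (w y)) x) / wMeas w P :=
          ENNReal.div_le_div_right hint _
      _ ≤ 𝒜 := by
          rw [h𝒜def, aInfConst]
          refine le_trans (le_iSup (fun _ : IsCube P => (∫⁻ x in P,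
            hlM (P.indicator fun y => ENNReal.ofReal (w y)) x) / wMeas w P)
            (isCube_ccell aq hhq 0 0)) ?_
          exact le_iSup (fun Q : Set (Fin n → ℝ) => ⨆ (_ : IsCube Q),
            (∫⁻ x in Q, hlM (Q.indicator fun y => ENNReal.ofReal (w y)) x) / wMeas w Q) P
  -- real constant facts
  have hAr1 : 1 ≤ 𝒜.toReal := by
    rw [← ENNReal.toReal_one]
    exact ENNReal.toReal_mono hAt h𝒜1
  -- trivial case |E| = 0
  by_cases hE0 : volume E = 0
  · rw [wMeas, setLIntegral_measure_zero E _ hE0, ENNReal.zero_div]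
    exact zero_le
  -- notation
  have hb0 : beta1 n 𝒜 ≠ 0 := pow_ne_zero _ (ENNReal.inv_ne_zero.2 ENNReal.ofNat_ne_top)
  have hbt : beta1 n 𝒜 ≠ ⊤ := pow_ne_top (ENNReal.inv_ne_top.2 two_ne_zero)
  have hb1 : beta1 n 𝒜 < 1 := by
    rw [beta1]
    refine pow_lt_one₀ zero_le ?_ (by omega)
    rw [ENNReal.inv_lt_one]
    exact one_lt_two
  have hVct : volume (cell aq hq 0 0) ≠ ⊤ := volume_cell_ne_top aq hhq 0 0
  have hVc0 : volume (cell aq hq 0 0) ≠ 0 := volume_cell_ne_zero aq hhq 0 0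
  have hvolQ : volume (ccell aq hq 0 0) = volume (cell aq hq 0 0) := by
    rw [volume_ccell aq hhq 0 0, volume_cell aq hhq 0 0]
  have hEVc : volume E ≤ volume (cell aq hq 0 0) := by
    rw [← hvolQ]
    exact measure_mono hEQ
  -- choice of J
  have hex : ∃ j : ℕ, beta1 n 𝒜 ^ j * volume (cell aq hq 0 0) < volume E := by
    have ht1 : Tendsto (fun j : ℕ => beta1 n 𝒜 ^ j) atTop (nhds 0) :=
      ENNReal.tendsto_pow_atTop_nhds_zero_of_lt_one hb1
    have ht2 : Tendsto (fun j : ℕ => beta1 n 𝒜 ^ j * volume (cell aq hq 0 0)) atTop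
        (nhds 0) := by
      have := ENNReal.Tendsto.mul_const ht1 (Or.inr hVct)
      simpa using this
    have hpos : (0:ℝ≥0∞) < volume E := zero_lt_iff.2 hE0
    exact (ht2.eventually (gt_mem_nhds hpos)).exists
  have hspec : beta1 n 𝒜 ^ (Nat.find hex) * volume (cell aq hq 0 0) < volume E :=
    Nat.find_spec hex
  have hj0ne : Nat.find hex ≠ 0 := by
    intro hc
    rw [hc, pow_zero, one_mul] at hspec
    exact absurd hEVc (not_le.2 hspec)
  set J := Nat.find hex - 1 with hJdef
  have hJsucc : J + 1 = Nat.find hex := by omega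
  have hJle : volume E ≤ beta1 n 𝒜 ^ J * volume (cell aq hq 0 0) :=
    le_of_not_gt (Nat.find_min hex (by omega))
  -- main estimate
  have hmain : wMeas w E ≤ (2⁻¹:ℝ≥0∞) ^ J * wMeas w (ccell aq hq 0 0) := by
    rw [wMeas, hint_eq, HwQ aq hq hhq]
    exact stepIII hfm h𝒜1 hAt Hpos Hfin HA aq hq hhq J hE hEQ hJle
  have hQ0 : wMeas w (ccell aq hq 0 0) ≠ 0 := by rw [HwQ aq hq hhq]; exact Hpos aq hq hhq
  have hQt : wMeas w (ccell aq hq 0 0) ≠ ⊤ := by rw [HwQ aq hq hhq]; exact Hfin aq hq hhq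
  have hdiv : wMeas w E / wMeas w (ccell aq hq 0 0) ≤ (2⁻¹:ℝ≥0∞) ^ J :=
    (ENNReal.div_le_iff_le_mul (Or.inl hQ0) (Or.inl hQt)).2 hmain
  -- exponent arithmetic
  have hden : (0:ℝ) < 1 + ((2*n+3 : ℝ) + (n+1) * 2^(n+3)) * 𝒜.toReal := by
    have h2p : (0:ℝ) < 2^(n+3) := by positivity
    have hn0 : (0:ℝ) ≤ (n:ℝ) := Nat.cast_nonneg n
    have hprod : (0:ℝ) ≤ ((2*n+3 : ℝ) + (n+1) * 2^(n+3)) * 𝒜.toReal :=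
      mul_nonneg (by positivity) ENNReal.toReal_nonneg
    linarith
  have hε0 : (0:ℝ) ≤ 1 / (1 + ((2*n+3 : ℝ) + (n+1) * 2^(n+3)) * 𝒜.toReal) := by positivity
  have hLε : ((n + 3 + (n+1) * mA n 𝒜 : ℕ) : ℝ)
      * (1 / (1 + ((2*n+3 : ℝ) + (n+1) * 2^(n+3)) * 𝒜.toReal)) ≤ 1 := by
    rw [mul_one_div, div_le_one hden]
    have hm : (mA n 𝒜 : ℝ) ≤ 2^(n+3) * 𝒜.toReal + 1 := by
      rw [mA, Nat.cast_max]
      refine max_le ?_ ?_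
      · have h2p : (0:ℝ) < 2^(n+3) := by positivity
        push_cast
        nlinarith
      · exact (Nat.ceil_lt_add_one (by positivity)).le
    have h2p : (0:ℝ) < 2^(n+3) := by positivity
    have hn0 : (0:ℝ) ≤ (n:ℝ) := Nat.cast_nonneg n
    push_cast
    nlinarith
  -- ratio bound
  have hratio : beta1 n 𝒜 ^ (J+1) ≤ volume E / volume (ccell aq hq 0 0) := by
    rw [hvolQ]
    have h1 : beta1 n 𝒜 ^ (J+1) * volume (cell aq hq 0 0) ≤ volume E := by
      rw [hJsucc]
      exact hspec.le
    calc beta1 n 𝒜 ^ (J+1)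
        = beta1 n 𝒜 ^ (J+1) * volume (cell aq hq 0 0) / volume (cell aq hq 0 0) := by
          rw [mul_div_assoc, ENNReal.div_self hVc0 hVct, mul_one]
      _ ≤ volume E / volume (cell aq hq 0 0) := ENNReal.div_le_div_right h1 _
  -- final rpow chain
  have hfinal : (2⁻¹:ℝ≥0∞) ^ J ≤ 2 * (volume E / volume (ccell aq hq 0 0))
      ^ (1 / (1 + ((2*n+3 : ℝ) + (n+1) * 2^(n+3)) * 𝒜.toReal)) := by
    set ε := 1 / (1 + ((2*n+3 : ℝ) + (n+1) * 2^(n+3)) * 𝒜.toReal) with hεdef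
    set L := n + 3 + (n+1) * mA n 𝒜 with hLdef
    have hbL : beta1 n 𝒜 = (2⁻¹:ℝ≥0∞) ^ L := by rw [beta1]
    have hinv0 : (2⁻¹:ℝ≥0∞) ≠ 0 := ENNReal.inv_ne_zero.2 ENNReal.ofNat_ne_top
    have hinvt : (2⁻¹:ℝ≥0∞) ≠ ⊤ := ENNReal.inv_ne_top.2 two_ne_zero
    have h2 : beta1 n 𝒜 ^ (J+1) = (2⁻¹:ℝ≥0∞) ^ (L * (J+1)) := by
      rw [hbL, ← pow_mul]
    have h3 : (beta1 n 𝒜 ^ (J+1)) ^ ε = ((2⁻¹:ℝ≥0∞) ^ ((((L*(J+1) : ℕ))):ℝ)) ^ ε := by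
      rw [h2, ← ENNReal.rpow_natCast]
    have hexp : (((L*(J+1) : ℕ)):ℝ) * ε ≤ ((J:ℝ) + 1) := by
      push_cast
      have hJ1 : (0:ℝ) ≤ (J:ℝ) + 1 := by positivity
      calc ((L:ℝ)) * ((J:ℝ)+1) * ε = ((L:ℝ) * ε) * ((J:ℝ)+1) := by ring
        _ ≤ 1 * ((J:ℝ)+1) := mul_le_mul_of_nonneg_right hLε hJ1
        _ = (J:ℝ)+1 := one_mul _
    have h5 : (2⁻¹:ℝ≥0∞) ^ ((J:ℝ)+1) ≤ (2⁻¹:ℝ≥0∞) ^ ((((L*(J+1):ℕ)):ℝ) * ε) :=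
      ENNReal.rpow_le_rpow_of_exponent_ge (ENNReal.inv_le_one.2 one_le_two) hexp
    have h6 : (2⁻¹:ℝ≥0∞) ^ ((J:ℝ)) = 2 * (2⁻¹:ℝ≥0∞) ^ ((J:ℝ)+1) := by
      rw [ENNReal.rpow_add (J:ℝ) 1 hinv0 hinvt, ENNReal.rpow_one]
      rw [show (2:ℝ≥0∞) * ((2⁻¹:ℝ≥0∞) ^ ((J:ℝ)) * 2⁻¹)
        = (2 * 2⁻¹) * (2⁻¹:ℝ≥0∞) ^ ((J:ℝ)) from by ring]
      rw [ENNReal.mul_inv_cancel two_ne_zero ENNReal.ofNat_ne_top, one_mul]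
    calc (2⁻¹:ℝ≥0∞) ^ J = (2⁻¹:ℝ≥0∞) ^ ((J:ℝ)) := (ENNReal.rpow_natCast _ J).symm
      _ = 2 * (2⁻¹:ℝ≥0∞) ^ ((J:ℝ)+1) := h6
      _ ≤ 2 * (2⁻¹:ℝ≥0∞) ^ ((((L*(J+1):ℕ)):ℝ) * ε) := mul_le_mul_right h5 2
      _ = 2 * ((2⁻¹:ℝ≥0∞) ^ ((((L*(J+1) : ℕ))):ℝ)) ^ ε := by rw [ENNReal.rpow_mul]
      _ = 2 * (beta1 n 𝒜 ^ (J+1)) ^ ε := by rw [h3]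
      _ ≤ 2 * (volume E / volume (ccell aq hq 0 0)) ^ ε :=
          mul_le_mul_right (ENNReal.rpow_le_rpow hratio hε0) 2
  exact hdiv.trans hfinal

end MainProof

/-- **`A_∞` measure decay.** There is a dimensional constant `τ_n` such that for every
`w ∈ A_∞`, with `ε_w = 1/(1 + τ_n [w]_{A_∞})`, every cube `Q` and measurable `E ⊆ Q` satisfy
`w(E)/w(Q) ≤ 2 (|E|/|Q|)^{ε_w}`. -/
theorem Ainfty_measure_decay (n : ℕ) :
    ∃ τ : ℝ, 0 < τ ∧
      ∀ w : (Fin n → ℝ) → ℝ, IsWeight w → aInfConst w ≠ ∞ →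
        ∀ Q : Set (Fin n → ℝ), IsCube Q →
          ∀ E : Set (Fin n → ℝ), MeasurableSet E → E ⊆ Q →
            wMeas w E / wMeas w Q ≤
              2 * (MeasureTheory.volume E / MeasureTheory.volume Q) ^
                (1 / (1 + τ * (aInfConst w).toReal)) := by
  exact Ainfty_measure_decay' n
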